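/- Let f : (0,∞) → ℝ be continuous and strictly convex with f(1) = 0, and define its dual f*(x) = x·f(1/x). For z, y in the open unit disk define d_f(z,y) = ∫_{−π}^{π} P(z,t)·f(P(y,t)/P(z,t)) dt. Then for all z, y in the open unit disk, d_f(z,y) = d_{f*}(z,y) and d_f(z,y) = d_f(y,z); that is, f and f* generate identical divergence distances and the f-divergence distance is symmetric. -/

import Mathlib

/-- The Poisson kernel of the unit disk:
`P(z,θ) = (1/(2π)) · (1 − |z|²)/|z − e^{iθ}|²`. -/
noncomputable def poisson (z : ℂ) (θ : ℝ) : ℝ :=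
  (1 / (2 * Real.pi)) * (1 - ‖z‖ ^ 2) /
    ‖z - Complex.exp (θ * Complex.I)‖ ^ 2

/-- The `f`-divergence distance between two points of the open unit disk:
`d_f(z,y) = ∫_{−π}^{π} P(z,t)·f(P(y,t)/P(z,t)) dt`. -/
noncomputable def divDist (f : ℝ → ℝ) (z y : ℂ) : ℝ :=
  ∫ t in (-Real.pi)..Real.pi, poisson z t * f (poisson y t / poisson z t)

/-! ### Basic facts about the Poisson kernel -/

lemma sub_exp_ne_zero {z : ℂ} (hz : ‖z‖ < 1) (t : ℝ) :
    z - Complex.exp (t * Complex.I) ≠ 0 := by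
  intro h
  rw [sub_eq_zero] at h
  rw [h, Complex.norm_exp_ofReal_mul_I] at hz
  exact lt_irrefl 1 hz

lemma poisson_pos {z : ℂ} (hz : ‖z‖ < 1) (t : ℝ) : 0 < poisson z t := by
  unfold poisson
  have h0 := norm_nonneg z
  have h1 : 0 < 1 - ‖z‖ ^ 2 := by nlinarith
  have h2 : 0 < ‖z - Complex.exp (t * Complex.I)‖ ^ 2 := by
    have := norm_pos_iff.mpr (sub_exp_ne_zero hz t)
    positivity
  have h3 : 0 < Real.pi := Real.pi_pos
  apply div_pos (mul_pos (by positivity) h1) h2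

lemma poisson_continuous {z : ℂ} (hz : ‖z‖ < 1) : Continuous (poisson z) := by
  unfold poisson
  apply Continuous.div
  · fun_prop
  · exact (continuous_norm.comp (by fun_prop)).pow 2
  · intro t
    exact pow_ne_zero 2 (norm_ne_zero_iff.mpr (sub_exp_ne_zero hz t))

lemma poisson_periodic (z : ℂ) (t : ℝ) : poisson z (t + 2 * Real.pi) = poisson z t := by
  unfold poisson
  have : Complex.exp (((t + 2 * Real.pi : ℝ)) * Complex.I) = Complex.exp (t * Complex.I) := by
    push_cast
    rw [add_mul, Complex.exp_add]
    simp [Complex.exp_two_pi_mul_I]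
  rw [this]

lemma poisson_normSq (z : ℂ) (t : ℝ) :
    poisson z t = (1 / (2 * Real.pi)) * (1 - ‖z‖ ^ 2) /
      Complex.normSq (z - Complex.exp (t * Complex.I)) := by
  unfold poisson
  rw [show ‖z - Complex.exp (↑t * Complex.I)‖ ^ 2
    = Complex.normSq (z - Complex.exp (↑t * Complex.I)) from Complex.sq_norm _]

lemma integrand_continuous (f : ℝ → ℝ) (hfc : ContinuousOn f (Set.Ioi 0))
    {z y : ℂ} (hz : ‖z‖ < 1) (hy : ‖y‖ < 1) :
    Continuous (fun t => poisson z t * f (poisson y t / poisson z t)) := by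
  apply (poisson_continuous hz).mul
  rw [continuous_iff_continuousAt]
  intro t
  apply ContinuousAt.comp
  · exact hfc.continuousAt (Ioi_mem_nhds (div_pos (poisson_pos hy t) (poisson_pos hz t)))
  · exact ((poisson_continuous hy).continuousAt).div
      ((poisson_continuous hz).continuousAt) (poisson_pos hz t).ne'

/-! ### The boundary map of a Möbius transformation -/

lemma self_eq_abs_mul_exp {v : ℂ} (hv : 0 < v.re) :
    v = ((‖v‖ : ℝ) : ℂ) * Complex.exp ((Real.arctan (v.im / v.re) : ℝ) * Complex.I) := by
  have habs : ‖v‖ = Real.sqrt (v.re ^ 2 + v.im ^ 2) := by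
    rw [Complex.norm_def, Complex.normSq_apply]; ring_nf
  have hsq : Real.sqrt (1 + (v.im / v.re) ^ 2) = Real.sqrt (v.re ^ 2 + v.im ^ 2) / v.re := by
    rw [eq_div_iff hv.ne', ← Real.sqrt_sq hv.le]
    rw [← Real.sqrt_mul (by positivity)]
    congr 1
    field_simp
    rw [Real.sq_sqrt (sq_nonneg _)]
  have hs0 : 0 < Real.sqrt (v.re ^ 2 + v.im ^ 2) := by
    apply Real.sqrt_pos.2; positivity
  have hcos : Real.cos (Real.arctan (v.im / v.re)) = v.re / Real.sqrt (v.re ^ 2 + v.im ^ 2) := by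
    rw [Real.cos_arctan, hsq]
    field_simp
  have hsin : Real.sin (Real.arctan (v.im / v.re)) = v.im / Real.sqrt (v.re ^ 2 + v.im ^ 2) := by
    rw [Real.sin_arctan, hsq]
    field_simp
  rw [Complex.exp_mul_I, ← Complex.ofReal_cos, ← Complex.ofReal_sin, hcos, hsin, habs]
  apply Complex.ext
  · simp
    field_simp
  · simp
    field_simp

lemma exp_neg_two_arctan {v : ℂ} (hv : 0 < v.re) :
    Complex.exp ((-(2 * Real.arctan (v.im / v.re)) : ℝ) * Complex.I) =
      (starRingEnd ℂ) v / v := by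
  have hv0 : v ≠ 0 := by
    intro h; rw [h] at hv; simp at hv
  have h1 := self_eq_abs_mul_exp hv
  set θ := Real.arctan (v.im / v.re) with hθ
  have hA0 : ((‖v‖ : ℝ) : ℂ) ≠ 0 := by
    exact_mod_cast (norm_pos_iff.mpr hv0).ne'
  have h2 : (starRingEnd ℂ) v = ((‖v‖ : ℝ) : ℂ) * Complex.exp ((-θ : ℝ) * Complex.I) := by
    conv_lhs => rw [h1]
    rw [map_mul, ← Complex.exp_conj]
    congr 1
    · simp
    · rw [map_mul, Complex.conj_ofReal, Complex.conj_I]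
      push_cast
      ring
  have h3 : (starRingEnd ℂ) v / v =
      (((‖v‖ : ℝ) : ℂ) * Complex.exp ((-θ : ℝ) * Complex.I)) /
        (((‖v‖ : ℝ) : ℂ) * Complex.exp ((θ : ℝ) * Complex.I)) := by
    rw [← h1, ← h2]
  rw [h3, mul_div_mul_left _ _ hA0, ← Complex.exp_sub]
  congr 1
  push_cast
  ring

noncomputable def Ufun (a : ℂ) (s : ℝ) : ℝ := 1 - (a.re * Real.cos s + a.im * Real.sin s)
noncomputable def Vfun (a : ℂ) (s : ℝ) : ℝ := a.im * Real.cos s - a.re * Real.sin s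
noncomputable def psiFun (a : ℂ) (s : ℝ) : ℝ :=
  s + Real.pi - 2 * Real.arctan (Vfun a s / Ufun a s)
noncomputable def psiDeriv (a : ℂ) (s : ℝ) : ℝ :=
  (1 - ‖a‖ ^ 2) / (Ufun a s ^ 2 + Vfun a s ^ 2)

lemma u_re (a : ℂ) (s : ℝ) :
    (1 - (starRingEnd ℂ) a * Complex.exp (s * Complex.I)).re = Ufun a s := by
  simp [Ufun, Complex.exp_mul_I, Complex.mul_re, ← Complex.ofReal_cos, ← Complex.ofReal_sin,
    Complex.add_re, Complex.add_im, Complex.mul_im]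

lemma u_im (a : ℂ) (s : ℝ) :
    (1 - (starRingEnd ℂ) a * Complex.exp (s * Complex.I)).im = Vfun a s := by
  simp [Vfun, Complex.exp_mul_I, Complex.mul_re, ← Complex.ofReal_cos, ← Complex.ofReal_sin,
    Complex.add_re, Complex.add_im, Complex.mul_im]
  ring

lemma U_pos {a : ℂ} (ha : ‖a‖ < 1) (s : ℝ) : 0 < Ufun a s := by
  have h2 := Complex.re_le_norm ((starRingEnd ℂ) a * Complex.exp (s * Complex.I))
  have h3 : ‖(starRingEnd ℂ) a * Complex.exp (s * Complex.I)‖ = ‖a‖ := by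
    rw [norm_mul, Complex.norm_exp_ofReal_mul_I, Complex.norm_conj, mul_one]
  rw [h3] at h2
  have h5 : Ufun a s = 1 - ((starRingEnd ℂ) a * Complex.exp (s * Complex.I)).re := by
    rw [← u_re]
    simp [Complex.sub_re]
  rw [h5]
  linarith

lemma UV_sq (a : ℂ) (s : ℝ) :
    Ufun a s ^ 2 + Vfun a s ^ 2 = 2 * Ufun a s - (1 - ‖a‖ ^ 2) := by
  have h1 : Real.sin s ^ 2 + Real.cos s ^ 2 = 1 := Real.sin_sq_add_cos_sq s
  have h2 : ‖a‖ ^ 2 = a.re ^ 2 + a.im ^ 2 := by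
    rw [Complex.sq_norm, Complex.normSq_apply]; ring
  unfold Ufun Vfun
  rw [h2]
  nlinarith [h1]

lemma UV_sq_pos {a : ℂ} (ha : ‖a‖ < 1) (s : ℝ) :
    0 < Ufun a s ^ 2 + Vfun a s ^ 2 := by
  have := U_pos ha s
  positivity

lemma hasDerivAt_psi {a : ℂ} (ha : ‖a‖ < 1) (s : ℝ) :
    HasDerivAt (psiFun a) (psiDeriv a s) s := by
  have hU : HasDerivAt (Ufun a) (-Vfun a s) s := by
    unfold Ufun Vfun
    have h := (((Real.hasDerivAt_cos s).const_mul a.re).add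
      ((Real.hasDerivAt_sin s).const_mul a.im)).const_sub 1
    exact h.congr_deriv (by ring)
  have hV : HasDerivAt (Vfun a) (Ufun a s - 1) s := by
    unfold Ufun Vfun
    have h := ((Real.hasDerivAt_cos s).const_mul a.im).sub
      ((Real.hasDerivAt_sin s).const_mul a.re)
    exact h.congr_deriv (by ring)
  have hU0 : Ufun a s ≠ 0 := (U_pos ha s).ne'
  have hq : HasDerivAt (fun t => Vfun a t / Ufun a t)
      (((Ufun a s - 1) * Ufun a s - Vfun a s * (-Vfun a s)) / (Ufun a s) ^ 2) s :=
    hV.div hU hU0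
  have harc := hq.arctan
  have hpsi := ((hasDerivAt_id s).add_const Real.pi).sub (harc.const_mul 2)
  unfold psiFun
  refine hpsi.congr_deriv (Eq.symm ?_)
  have hsq := UV_sq a s
  have hpos := UV_sq_pos ha s
  unfold psiDeriv
  rw [eq_comm]
  field_simp
  linear_combination (-1 : ℝ) * hsq

lemma psiDeriv_continuous {a : ℂ} (ha : ‖a‖ < 1) : Continuous (psiDeriv a) := by
  unfold psiDeriv
  apply Continuous.div continuous_const
  · unfold Ufun Vfun
    fun_prop
  · intro s
    exact (UV_sq_pos ha s).ne'

lemma u_ne_zero {a : ℂ} (ha : ‖a‖ < 1) (s : ℝ) :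
    (1 - (starRingEnd ℂ) a * Complex.exp (s * Complex.I)) ≠ 0 := by
  intro h
  have h1 := u_re a s
  rw [h] at h1
  have := U_pos ha s
  rw [← h1] at this
  simp at this

lemma exp_psi {a : ℂ} (ha : ‖a‖ < 1) (s : ℝ) :
    Complex.exp ((psiFun a s : ℝ) * Complex.I) =
      (a - Complex.exp (s * Complex.I)) /
        (1 - (starRingEnd ℂ) a * Complex.exp (s * Complex.I)) := by
  set w := Complex.exp ((s : ℂ) * Complex.I) with hw_def
  set u := 1 - (starRingEnd ℂ) a * w with hu_def
  have hre : 0 < u.re := by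
    rw [show u.re = Ufun a s from u_re a s]
    exact U_pos ha s
  have hu0 : u ≠ 0 := u_ne_zero ha s
  have harg : Vfun a s / Ufun a s = u.im / u.re := by
    rw [show u.im = Vfun a s from u_im a s, show u.re = Ufun a s from u_re a s]
  have hps : psiFun a s = s + Real.pi + (-(2 * Real.arctan (u.im / u.re))) := by
    unfold psiFun
    rw [← harg]
    ring
  have hsplit : ((psiFun a s : ℝ) : ℂ) * Complex.I =
      (s : ℂ) * Complex.I + (Real.pi : ℂ) * Complex.I +
        ((-(2 * Real.arctan (u.im / u.re)) : ℝ) : ℂ) * Complex.I := by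
    rw [hps]
    push_cast
    ring
  rw [hsplit, Complex.exp_add, Complex.exp_add, Complex.exp_pi_mul_I,
    exp_neg_two_arctan hre]
  have hw : w * (starRingEnd ℂ) w = 1 := by
    rw [← Complex.exp_conj]
    rw [← Complex.exp_add]
    simp
  have hcu : (starRingEnd ℂ) u = 1 - a * (starRingEnd ℂ) w := by
    rw [hu_def]
    simp
  rw [hcu]
  field_simp
  rw [← hw_def]
  linear_combination a * hw

lemma psi_shift (a : ℂ) : psiFun a Real.pi = psiFun a (-Real.pi) + 2 * Real.pi := by
  unfold psiFun Vfun Ufun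
  simp [Real.cos_pi, Real.sin_pi]
  ring

/-! ### The parameter of the Möbius involution swapping `z` and `y` -/

noncomputable def mobA (z y : ℂ) : ℂ :=
  (y * (1 - (Complex.normSq z : ℂ)) + z * (1 - (Complex.normSq y : ℂ))) /
    ((1 - Complex.normSq y * Complex.normSq z : ℝ) : ℂ)

lemma mobA_symm (z y : ℂ) : mobA z y = mobA y z := by
  unfold mobA
  ring_nf

lemma normSq_lt_one {z : ℂ} (hz : ‖z‖ < 1) : Complex.normSq z < 1 := by
  rw [← Complex.sq_norm]
  nlinarith [norm_nonneg z]

lemma denom_pos {z y : ℂ} (hz : ‖z‖ < 1) (hy : ‖y‖ < 1) :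
    0 < 1 - Complex.normSq y * Complex.normSq z := by
  have h1 := normSq_lt_one hz
  have h2 := normSq_lt_one hy
  have h3 := Complex.normSq_nonneg z
  have h4 := Complex.normSq_nonneg y
  nlinarith

lemma mobA_rel {z y : ℂ} (hz : ‖z‖ < 1) (hy : ‖y‖ < 1) :
    mobA z y + (starRingEnd ℂ) (mobA z y) * y * z = y + z := by
  have hD := denom_pos hz hy
  have hD' : ((1 - Complex.normSq y * Complex.normSq z : ℝ) : ℂ) ≠ 0 := by
    exact_mod_cast hD.ne'
  have hA : mobA z y * ((1 - Complex.normSq y * Complex.normSq z : ℝ) : ℂ)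
      = y * (1 - (Complex.normSq z : ℂ)) + z * (1 - (Complex.normSq y : ℂ)) := by
    unfold mobA
    exact div_mul_cancel₀ _ hD'
  have hAb : (starRingEnd ℂ) (mobA z y) * ((1 - Complex.normSq y * Complex.normSq z : ℝ) : ℂ)
      = (starRingEnd ℂ) y * (1 - (Complex.normSq z : ℂ))
        + (starRingEnd ℂ) z * (1 - (Complex.normSq y : ℂ)) := by
    have h := congrArg (starRingEnd ℂ) hA
    simpa [map_mul, map_add, map_sub, Complex.conj_ofReal] using h
  have hcast : ((1 - Complex.normSq y * Complex.normSq z : ℝ) : ℂ)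
      = 1 - (Complex.normSq y : ℂ) * (Complex.normSq z : ℂ) := by push_cast; ring
  apply mul_right_cancel₀ hD'
  rw [hcast] at hA hAb ⊢
  linear_combination hA + y * z * hAb + z * (1 - (Complex.normSq z : ℂ)) * Complex.mul_conj y
    + y * (1 - (Complex.normSq y : ℂ)) * Complex.mul_conj z

lemma mobA_abs_lt_one {z y : ℂ} (hz : ‖z‖ < 1) (hy : ‖y‖ < 1) :
    ‖mobA z y‖ < 1 := by
  have hD := denom_pos hz hy
  unfold mobA
  rw [norm_div]
  have hden : ‖((1 - Complex.normSq y * Complex.normSq z : ℝ) : ℂ)‖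
      = 1 - Complex.normSq y * Complex.normSq z := by
    rw [Complex.norm_real, Real.norm_eq_abs, abs_of_pos hD]
  rw [hden, div_lt_one hD]
  have h1 : ‖y * (1 - (Complex.normSq z : ℂ)) + z * (1 - (Complex.normSq y : ℂ))‖
      ≤ ‖y‖ * (1 - Complex.normSq z) + ‖z‖ * (1 - Complex.normSq y) := by
    refine (norm_add_le _ _).trans ?_
    rw [norm_mul, norm_mul]
    have e1 : ‖(1 : ℂ) - (Complex.normSq z : ℂ)‖ = 1 - Complex.normSq z := by
      rw [show (1 : ℂ) - (Complex.normSq z : ℂ) = ((1 - Complex.normSq z : ℝ) : ℂ) by push_cast; ring,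
        Complex.norm_real, Real.norm_eq_abs, abs_of_pos (by linarith [normSq_lt_one hz])]
    have e2 : ‖(1 : ℂ) - (Complex.normSq y : ℂ)‖ = 1 - Complex.normSq y := by
      rw [show (1 : ℂ) - (Complex.normSq y : ℂ) = ((1 - Complex.normSq y : ℝ) : ℂ) by push_cast; ring,
        Complex.norm_real, Real.norm_eq_abs, abs_of_pos (by linarith [normSq_lt_one hy])]
    rw [e1, e2]
  refine h1.trans_lt ?_
  have hy0 := norm_nonneg y
  have hz0 := norm_nonneg z
  have hny : Complex.normSq y = ‖y‖ ^ 2 := (Complex.sq_norm y).symm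
  have hnz : Complex.normSq z = ‖z‖ ^ 2 := (Complex.sq_norm z).symm
  rw [hny, hnz]
  nlinarith [mul_pos (mul_pos (sub_pos.2 hy) (sub_pos.2 hz))
    (sub_pos.2 (show ‖y‖ * ‖z‖ < 1 by nlinarith))]

lemma ofReal_one_sub_sq_abs (v : ℂ) :
    ((1 - ‖v‖ ^ 2 : ℝ) : ℂ) = 1 - v * (starRingEnd ℂ) v := by
  rw [Complex.ofReal_sub, Complex.ofReal_one, Complex.sq_norm, Complex.mul_conj]

lemma key_identity {z y : ℂ} (hz : ‖z‖ < 1) (hy : ‖y‖ < 1) :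
    (1 - ‖y‖ ^ 2) * Complex.normSq (1 - (starRingEnd ℂ) (mobA z y) * z)
      = (1 - ‖z‖ ^ 2) * (1 - ‖mobA z y‖ ^ 2) := by
  set a := mobA z y with ha_def
  have ha1 := mobA_rel hz hy
  rw [← ha_def] at ha1
  have ha1b : (starRingEnd ℂ) a + a * (starRingEnd ℂ) y * (starRingEnd ℂ) z
      = (starRingEnd ℂ) y + (starRingEnd ℂ) z := by
    have := congrArg (starRingEnd ℂ) ha1
    simpa [map_add, map_mul] using this
  apply Complex.ofReal_injective
  rw [Complex.ofReal_mul, Complex.ofReal_mul, ofReal_one_sub_sq_abs, ofReal_one_sub_sq_abs,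
    ofReal_one_sub_sq_abs, ← Complex.mul_conj]
  simp only [map_sub, map_mul, map_one, Complex.conj_conj]
  linear_combination ((starRingEnd ℂ) a - (starRingEnd ℂ) z) * ha1 +
    y * (1 - (starRingEnd ℂ) a * z) * ha1b

/-! ### Symmetry -/

lemma helperI1 {Na Su c Nz Az Dy Ny : ℝ} (hSu : Su ≠ 0) (hAz : Az ≠ 0) (hDy : Dy ≠ 0)
    (hK : Ny * Az = Nz * Na) : Na / Su * (c * Nz / (Az * Dy / Su)) = c * Ny / Dy := by
  field_simp
  linear_combination (-c) * hK

lemma helperR {c Ny Nz Ay Az Dy Dz Su : ℝ} (hc : c ≠ 0) (hAy : Ay ≠ 0) (hAz : Az ≠ 0)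
    (hDy : Dy ≠ 0) (hDz : Dz ≠ 0) (hSu : Su ≠ 0) (hNy : Ny ≠ 0) (hNz : Nz ≠ 0)
    (hNN : Ny ^ 2 * Az = Nz ^ 2 * Ay) :
    (c * Ny / (Ay * Dz / Su)) / (c * Nz / (Az * Dy / Su)) = (c * Nz / Dz) / (c * Ny / Dy) := by
  field_simp
  linear_combination hNN

lemma divDist_symm (f : ℝ → ℝ) (hfc : ContinuousOn f (Set.Ioi 0))
    {z y : ℂ} (hz : ‖z‖ < 1) (hy : ‖y‖ < 1) :
    divDist f z y = divDist f y z := by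
  set a := mobA z y with ha_def
  have haa : ‖a‖ < 1 := mobA_abs_lt_one hz hy
  have ha1 : a + (starRingEnd ℂ) a * y * z = y + z := mobA_rel hz hy
  set H : ℝ → ℝ := fun t => poisson z t * f (poisson y t / poisson z t) with hH
  set G : ℝ → ℝ := fun t => poisson y t * f (poisson z t / poisson y t) with hG
  have hHcont : Continuous H := integrand_continuous f hfc hz hy
  -- the key facts
  have hK : (1 - ‖y‖ ^ 2) * Complex.normSq (1 - (starRingEnd ℂ) a * z)
      = (1 - ‖z‖ ^ 2) * (1 - ‖a‖ ^ 2) := key_identity hz hy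
  have hKy : (1 - ‖z‖ ^ 2) * Complex.normSq (1 - (starRingEnd ℂ) a * y)
      = (1 - ‖y‖ ^ 2) * (1 - ‖a‖ ^ 2) := by
    have h := key_identity hy hz
    rw [← mobA_symm z y] at h
    exact h
  have hNz : (0:ℝ) < 1 - ‖z‖ ^ 2 := by nlinarith [norm_nonneg z]
  have hNy : (0:ℝ) < 1 - ‖y‖ ^ 2 := by nlinarith [norm_nonneg y]
  have hNa : (0:ℝ) < 1 - ‖a‖ ^ 2 := by nlinarith [norm_nonneg a]
  have hπ : (0:ℝ) < Real.pi := Real.pi_pos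
  -- pointwise identity
  have hmain : ∀ s : ℝ, psiDeriv a s • H (psiFun a s) = G s := by
    intro s
    set w := Complex.exp ((s : ℂ) * Complex.I) with hw_def
    set u := 1 - (starRingEnd ℂ) a * w with hu_def
    have hu0 : u ≠ 0 := u_ne_zero haa s
    have hE : Complex.exp ((psiFun a s : ℝ) * Complex.I) = (a - w) / u := exp_psi haa s
    have hwz : w - z ≠ 0 := by
      have := sub_exp_ne_zero hz s
      intro h
      rw [sub_eq_zero] at h
      exact this (by rw [← h]; ring)
    have hwy : w - y ≠ 0 := by
      have := sub_exp_ne_zero hy s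
      intro h
      rw [sub_eq_zero] at h
      exact this (by rw [← h]; ring)
    have hAz0 : (1 : ℂ) - (starRingEnd ℂ) a * z ≠ 0 := by
      intro h
      rw [sub_eq_zero] at h
      have : ‖(starRingEnd ℂ) a * z‖ < 1 := by
        rw [norm_mul, Complex.norm_conj]
        nlinarith [norm_nonneg a, norm_nonneg z]
      rw [← h] at this
      simp at this
    have hAy0 : (1 : ℂ) - (starRingEnd ℂ) a * y ≠ 0 := by
      intro h
      rw [sub_eq_zero] at h
      have : ‖(starRingEnd ℂ) a * y‖ < 1 := by
        rw [norm_mul, Complex.norm_conj]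
        nlinarith [norm_nonneg a, norm_nonneg y]
      rw [← h] at this
      simp at this
    have hzΦ : z - Complex.exp ((psiFun a s : ℝ) * Complex.I)
        = (1 - (starRingEnd ℂ) a * z) * (w - y) / u := by
      rw [hE]
      field_simp
      linear_combination (-1 : ℂ) * ha1
    have hyΦ : y - Complex.exp ((psiFun a s : ℝ) * Complex.I)
        = (1 - (starRingEnd ℂ) a * y) * (w - z) / u := by
      rw [hE]
      field_simp
      linear_combination (-1 : ℂ) * ha1
    -- normSq abbreviations
    have hSu : Ufun a s ^ 2 + Vfun a s ^ 2 = Complex.normSq u := by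
      rw [Complex.normSq_apply, show u.re = Ufun a s from u_re a s,
        show u.im = Vfun a s from u_im a s]
      ring
    have hSu0 : (0:ℝ) < Complex.normSq u := Complex.normSq_pos.2 hu0
    have hAz : (0:ℝ) < Complex.normSq (1 - (starRingEnd ℂ) a * z) := Complex.normSq_pos.2 hAz0
    have hAy : (0:ℝ) < Complex.normSq (1 - (starRingEnd ℂ) a * y) := Complex.normSq_pos.2 hAy0
    have hDy : (0:ℝ) < Complex.normSq (w - y) := Complex.normSq_pos.2 hwy
    have hDz : (0:ℝ) < Complex.normSq (w - z) := Complex.normSq_pos.2 hwz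
    have hnormZ : Complex.normSq (z - Complex.exp ((psiFun a s : ℝ) * Complex.I))
        = Complex.normSq (1 - (starRingEnd ℂ) a * z) * Complex.normSq (w - y)
          / Complex.normSq u := by
      rw [hzΦ, Complex.normSq_div, Complex.normSq_mul]
    have hnormY : Complex.normSq (y - Complex.exp ((psiFun a s : ℝ) * Complex.I))
        = Complex.normSq (1 - (starRingEnd ℂ) a * y) * Complex.normSq (w - z)
          / Complex.normSq u := by
      rw [hyΦ, Complex.normSq_div, Complex.normSq_mul]
    have hNN : (1 - ‖y‖ ^ 2) ^ 2 * Complex.normSq (1 - (starRingEnd ℂ) a * z)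
        = (1 - ‖z‖ ^ 2) ^ 2 * Complex.normSq (1 - (starRingEnd ℂ) a * y) := by
      nlinarith [hK, hKy]
    have hswz : Complex.normSq (z - w) = Complex.normSq (w - z) := by
      rw [← Complex.normSq_neg]; congr 1; ring
    have hswy : Complex.normSq (y - w) = Complex.normSq (w - y) := by
      rw [← Complex.normSq_neg]; congr 1; ring
    have hc0 : (1 : ℝ) / (2 * Real.pi) ≠ 0 := by positivity
    -- the ratio identity
    have hr : poisson y (psiFun a s) / poisson z (psiFun a s) = poisson z s / poisson y s := by
      rw [poisson_normSq y (psiFun a s), poisson_normSq z (psiFun a s),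
        poisson_normSq z s, poisson_normSq y s, hnormZ, hnormY, ← hw_def, hswz, hswy]
      exact helperR hc0 hAy.ne' hAz.ne' hDy.ne' hDz.ne' hSu0.ne' hNy.ne' hNz.ne' hNN
    have hI1 : psiDeriv a s * poisson z (psiFun a s) = poisson y s := by
      rw [poisson_normSq z (psiFun a s), poisson_normSq y s, hnormZ, ← hw_def, hswy]
      rw [show psiDeriv a s = (1 - ‖a‖ ^ 2) / Complex.normSq u from by
        unfold psiDeriv; rw [hSu]]
      exact helperI1 hSu0.ne' hAz.ne' hDy.ne' hK
    simp only [hH, hG, smul_eq_mul]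
    rw [hr, ← mul_assoc, hI1]
  -- change of variables
  have hCoV : ∫ s in (-Real.pi)..Real.pi, psiDeriv a s • H (psiFun a s)
      = ∫ t in (psiFun a (-Real.pi))..(psiFun a Real.pi), H t :=
    intervalIntegral.integral_comp_smul_deriv (fun x _ => hasDerivAt_psi haa x)
      ((psiDeriv_continuous haa).continuousOn) hHcont
  have hper : Function.Periodic H (2 * Real.pi) := by
    intro t
    simp only [hH]
    rw [poisson_periodic, poisson_periodic]
  have h2 : ∫ t in (psiFun a (-Real.pi))..(psiFun a Real.pi), H t
      = ∫ t in (-Real.pi)..Real.pi, H t := by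
    rw [psi_shift a]
    rw [hper.intervalIntegral_add_eq (psiFun a (-Real.pi)) (-Real.pi),
      show -Real.pi + 2 * Real.pi = Real.pi by ring]
  calc divDist f z y = ∫ t in (-Real.pi)..Real.pi, H t := rfl
    _ = ∫ t in (psiFun a (-Real.pi))..(psiFun a Real.pi), H t := h2.symm
    _ = ∫ s in (-Real.pi)..Real.pi, psiDeriv a s • H (psiFun a s) := hCoV.symm
    _ = ∫ s in (-Real.pi)..Real.pi, G s := by
        apply intervalIntegral.integral_congr
        intro s _
        exact hmain s
    _ = divDist f y z := rfl

lemma divDist_dual (f : ℝ → ℝ)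
    {z y : ℂ} (hz : ‖z‖ < 1) (hy : ‖y‖ < 1) :
    divDist (fun x => x * f (1 / x)) z y = divDist f y z := by
  unfold divDist
  apply intervalIntegral.integral_congr
  intro t _
  have hpz := poisson_pos hz t
  have hpy := poisson_pos hy t
  have h1 : (1 : ℝ) / (poisson y t / poisson z t) = poisson z t / poisson y t := by
    rw [one_div_div]
  show poisson z t * ((poisson y t / poisson z t) * f (1 / (poisson y t / poisson z t)))
      = poisson y t * f (poisson z t / poisson y t)
  rw [h1]
  field_simp

/-- **Symmetry and duality of the `f`-divergence distance.**  Let `f` be continuous and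
strictly convex on `(0,∞)` with `f(1) = 0`, and let `f*(x) = x·f(1/x)` be its dual.
Then for all `z, y` in the open unit disk, `d_f(z,y) = d_{f*}(z,y)` and
`d_f(z,y) = d_f(y,z)`. -/
theorem divDist_dual_and_symm
    (f : ℝ → ℝ)
    (hfc : ContinuousOn f (Set.Ioi 0))
    (hconv : StrictConvexOn ℝ (Set.Ioi 0) f)
    (hf1 : f 1 = 0) :
    ∀ z : ℂ, ‖z‖ < 1 → ∀ y : ℂ, ‖y‖ < 1 →
      divDist f z y = divDist (fun x => x * f (1 / x)) z y ∧
      divDist f z y = divDist f y z := by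
  intro z hz y hy
  have hsymm := divDist_symm f hfc hz hy
  have hdual := divDist_dual f hz hy
  exact ⟨by rw [hdual]; exact hsymm, hsymm⟩
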